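/- Let ν ∈ (0,1), μ ∈ [0, 1 − ν), γ ∈ (0,2), and let {x^k}, {y^k}, {β_k}, {e1^k}, {e2^k} be generated by the PC-algorithm II with outer perturbations: for every k ≥ 0, β_k > 0; y^k = P_C(x^k − β_k F(x^k) + e1^k); β_k‖F(x^k) − F(y^k)‖ ≤ ν‖x^k − y^k‖; ‖e1^k‖ ≤ μ‖x^k − y^k‖; d^k := (x^k − y^k) − β_k(F(x^k) − F(y^k)) + e1^k ≠ 0; ρ_k := ⟨x^k − y^k, d^k⟩/‖d^k‖²; x^{k+1} = P_C(x^k − γ ρ_k β_k F(y^k) + e2^k). Then for every k ≥ 0 and every x ∈ C: ⟨x − y^k, γ ρ_k β_k F(y^k)⟩ + (1/2)(‖x − x^k‖² − ‖x − x^{k+1}‖²) ≥ (1/2) γ(2 − γ) ρ_k² ‖d^k‖² + ⟨x − x^{k+1}, e2^k⟩. -/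

import Mathlib

open RealInnerProductSpace

theorem stmt_8 {H : Type*} [NormedAddCommGroup H] [InnerProductSpace ℝ H]
    [CompleteSpace H]
    (C : Set H) (hCne : C.Nonempty) (hCcl : IsClosed C) (hCcv : Convex ℝ C)
    (P : H → H) (hPmem : ∀ u : H, P u ∈ C)
    (hPchar : ∀ u : H, ∀ c ∈ C, ⟪u - P u, c - P u⟫ ≤ 0)
    (F : H → H) (hmono : ∀ u v : H, 0 ≤ ⟪F u - F v, u - v⟫)
    (L : ℝ) (hL : 0 < L) (hLip : ∀ u v : H, ‖F u - F v‖ ≤ L * ‖u - v‖)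
    (ν μ γ : ℝ) (hν : ν ∈ Set.Ioo (0 : ℝ) 1) (hμ : μ ∈ Set.Ico (0 : ℝ) (1 - ν))
    (hγ : γ ∈ Set.Ioo (0 : ℝ) 2)
    (e1 e2 : ℕ → H)
    (x y : ℕ → H) (β : ℕ → ℝ) (d : ℕ → H) (ρ : ℕ → ℝ)
    (hβpos : ∀ k, 0 < β k)
    (hy : ∀ k, y k = P (x k - β k • F (x k) + e1 k))
    (hstep : ∀ k, β k * ‖F (x k) - F (y k)‖ ≤ ν * ‖x k - y k‖)
    (he1b : ∀ k, ‖e1 k‖ ≤ μ * ‖x k - y k‖)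
    (hd : ∀ k, d k = (x k - y k) - β k • (F (x k) - F (y k)) + e1 k)
    (hdne : ∀ k, d k ≠ 0)
    (hρ : ∀ k, ρ k = ⟪x k - y k, d k⟫ / ‖d k‖ ^ 2)
    (hx : ∀ k, x (k + 1) = P (x k - (γ * ρ k * β k) • F (y k) + e2 k)) :
    ∀ k : ℕ, ∀ z ∈ C,
      (1 / 2) * γ * (2 - γ) * ρ k ^ 2 * ‖d k‖ ^ 2 + ⟪z - x (k + 1), e2 k⟫ ≤
        ⟪z - y k, (γ * ρ k * β k) • F (y k)⟫ +
          (1 / 2) * (‖z - x k‖ ^ 2 - ‖z - x (k + 1)‖ ^ 2) := by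
  intro k z hz
  have hX'mem : x (k + 1) ∈ C := by rw [hx k]; exact hPmem _
  -- first projection characterization, at y k, tested at x (k+1)
  have hchar1 : ⟪d k - β k • F (y k), x (k + 1) - y k⟫ ≤ 0 := by
    have h := hPchar (x k - β k • F (x k) + e1 k) (x (k + 1)) hX'mem
    rw [← hy k] at h
    have hvec : x k - β k • F (x k) + e1 k - y k = d k - β k • F (y k) := by
      rw [hd k]; module
    rwa [hvec] at h
  -- second projection characterization, at x (k+1), tested at z
  have hchar2 : ⟪x k - (γ * ρ k * β k) • F (y k) + e2 k - x (k + 1), z - x (k + 1)⟫ ≤ 0 := by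
    have h := hPchar (x k - (γ * ρ k * β k) • F (y k) + e2 k) z hz
    rwa [← hx k] at h
  -- inner product of x k - y k with d k
  have hXYd : (1 - ν - μ) * ‖x k - y k‖ ^ 2 ≤ ⟪x k - y k, d k⟫ := by
    have hexp : ⟪x k - y k, d k⟫
        = ‖x k - y k‖ ^ 2 - β k * ⟪x k - y k, F (x k) - F (y k)⟫ + ⟪x k - y k, e1 k⟫ := by
      rw [hd k, inner_add_right, inner_sub_right, real_inner_smul_right,
        real_inner_self_eq_norm_sq]
    have hcs1 : β k * ⟪x k - y k, F (x k) - F (y k)⟫ ≤ ν * ‖x k - y k‖ ^ 2 := by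
      have h1 : ⟪x k - y k, F (x k) - F (y k)⟫ ≤ ‖x k - y k‖ * ‖F (x k) - F (y k)‖ :=
        real_inner_le_norm _ _
      have h2 := hstep k
      nlinarith [(hβpos k).le, norm_nonneg (x k - y k), norm_nonneg (F (x k) - F (y k))]
    have hcs2 : -(μ * ‖x k - y k‖ ^ 2) ≤ ⟪x k - y k, e1 k⟫ := by
      have h1 : |⟪x k - y k, e1 k⟫| ≤ ‖x k - y k‖ * ‖e1 k‖ := abs_real_inner_le_norm _ _
      have h2 := he1b k
      nlinarith [neg_abs_le ⟪x k - y k, e1 k⟫, norm_nonneg (x k - y k), norm_nonneg (e1 k)]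
    rw [hexp]; nlinarith
  have hXYd0 : 0 ≤ ⟪x k - y k, d k⟫ := by
    have h1 : 0 ≤ 1 - ν - μ := by have := hμ.2; have := hν.1; linarith [hμ.1]
    nlinarith [sq_nonneg ‖x k - y k‖]
  have hdpos : (0 : ℝ) < ‖d k‖ ^ 2 := by
    have := norm_pos_iff.mpr (hdne k); positivity
  have hρ0 : 0 ≤ ρ k := by rw [hρ k]; positivity
  have hrd : ⟪x k - y k, d k⟫ = ρ k * ‖d k‖ ^ 2 := by
    rw [hρ k, div_mul_cancel₀ _ hdpos.ne']
  -- scalar expansions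
  have hγr : 0 ≤ γ * ρ k := mul_nonneg hγ.1.le hρ0
  have f1 : ⟪d k, x (k + 1) - y k⟫ - β k * ⟪F (y k), x (k + 1) - y k⟫ ≤ 0 := by
    have := hchar1
    rwa [inner_sub_left, real_inner_smul_left] at this
  have f1' : γ * ρ k * ⟪d k, x (k + 1) - y k⟫
      ≤ γ * ρ k * (β k * ⟪F (y k), x (k + 1) - y k⟫) := by
    apply mul_le_mul_of_nonneg_left _ hγr
    linarith
  have f2 : ⟪x k - x (k + 1), z - x (k + 1)⟫
      - γ * ρ k * β k * ⟪F (y k), z - x (k + 1)⟫ + ⟪e2 k, z - x (k + 1)⟫ ≤ 0 := by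
    have hv : x k - (γ * ρ k * β k) • F (y k) + e2 k - x (k + 1)
        = ((x k - x (k + 1)) - (γ * ρ k * β k) • F (y k)) + e2 k := by abel
    have := hchar2
    rw [hv, inner_add_left, inner_sub_left, real_inner_smul_left] at this
    linarith
  -- norm identity
  have f3 : ‖z - x k‖ ^ 2
      = ‖z - x (k + 1)‖ ^ 2 + 2 * ⟪z - x (k + 1), x (k + 1) - x k⟫ + ‖x (k + 1) - x k‖ ^ 2 := by
    have h : z - x k = (z - x (k + 1)) + (x (k + 1) - x k) := by abel
    rw [h, norm_add_sq_real]
  have f4 : ⟪d k, x (k + 1) - y k⟫ = ⟪d k, x (k + 1) - x k⟫ + ρ k * ‖d k‖ ^ 2 := by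
    have h : x (k + 1) - y k = (x (k + 1) - x k) + (x k - y k) := by abel
    rw [h, inner_add_right]
    congr 1
    rw [real_inner_comm]
    exact hrd
  have f5 : 0 ≤ (γ * ρ k) ^ 2 * ‖d k‖ ^ 2 + 2 * (γ * ρ k) * ⟪d k, x (k + 1) - x k⟫
      + ‖x (k + 1) - x k‖ ^ 2 := by
    have h := norm_add_sq_real ((γ * ρ k) • d k) (x (k + 1) - x k)
    have h0 : (0 : ℝ) ≤ ‖(γ * ρ k) • d k + (x (k + 1) - x k)‖ ^ 2 := sq_nonneg _
    rw [h, norm_smul, real_inner_smul_left] at h0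
    rw [Real.norm_eq_abs] at h0
    nlinarith [h0, sq_abs (γ * ρ k), mul_pow |γ * ρ k| ‖d k‖ 2]
  -- rewrite inner products appearing in the goal
  have g1 : ⟪z - y k, (γ * ρ k * β k) • F (y k)⟫
      = γ * ρ k * β k * (⟪F (y k), z - x (k + 1)⟫ + ⟪F (y k), x (k + 1) - y k⟫) := by
    rw [real_inner_smul_right, real_inner_comm]
    congr 1
    rw [← inner_add_right]
    congr 1
    abel
  have g2 : ⟪z - x (k + 1), e2 k⟫ = ⟪e2 k, z - x (k + 1)⟫ := real_inner_comm _ _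
  have g3 : ⟪x k - x (k + 1), z - x (k + 1)⟫ = -⟪z - x (k + 1), x (k + 1) - x k⟫ := by
    rw [real_inner_comm]
    rw [show x k - x (k + 1) = -(x (k + 1) - x k) by abel, inner_neg_right]
  rw [g1, g2]
  rw [g3] at f2
  rw [f4] at f1'
  linarith [f1', f2, f3, f5]
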